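/- Let c₁, …, c_k ∈ ℝⁿ, r₁, …, r_k > 0, F_R the logarithmic barrier of R = ⋂_{i=1}^k {x : ‖x − c_i‖ ≤ r_i}, and v_R(x) = log det(∇²F_R(x)) the volumetric barrier, defined on the interior U = {x : ‖x − c_i‖ < r_i ∀i} (where ∇²F_R(x) is positive definite). Then for x ∈ U, writing H = ∇²F_R(x), d_i = d_i(x), and σ_i = d_i²·⟪x − c_i, H⁻¹(x − c_i)⟫, the gradient of v_R at x equals ∇v_R(x) = (2·tr(H⁻¹))·Σ_{i=1}^k d_i²(x − c_i) + 4·H⁻¹(Σ_{i=1}^k d_i²(x − c_i)) + 8·Σ_{i=1}^k d_i σ_i (x − c_i). -/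

import Mathlib

set_option maxHeartbeats 2000000
open scoped RealInnerProductSpace
open scoped Matrix

noncomputable abbrev E' (n : ℕ) := EuclideanSpace ℝ (Fin n)

noncomputable def detCM (n : ℕ) : ContinuousMultilinearMap ℝ (fun _ : Fin n => (Fin n → ℝ)) ℝ :=
  MultilinearMap.mkContinuous
    (Matrix.detRowAlternating (n := Fin n) (R := ℝ)).toMultilinearMap
    (Nat.factorial n) (by
      intro m
      have : Matrix.det (Matrix.of m) = ∑ σ : Equiv.Perm (Fin n), Equiv.Perm.sign σ • ∏ i, m (σ i) i :=
        Matrix.det_apply _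
      rw [show ((Matrix.detRowAlternating (n := Fin n) (R := ℝ)).toMultilinearMap m : ℝ)
          = Matrix.det (Matrix.of m) from rfl, this]
      calc ‖∑ σ : Equiv.Perm (Fin n), Equiv.Perm.sign σ • ∏ i, m (σ i) i‖
          ≤ ∑ σ : Equiv.Perm (Fin n), ‖Equiv.Perm.sign σ • ∏ i, m (σ i) i‖ := norm_sum_le _ _
        _ ≤ ∑ σ : Equiv.Perm (Fin n), ∏ i, ‖m i‖ := by
            apply Finset.sum_le_sum
            intro σ _
            have h1 : ‖Equiv.Perm.sign σ • ∏ i, m (σ i) i‖ = ‖∏ i, m (σ i) i‖ := by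
              rcases Int.units_eq_one_or (Equiv.Perm.sign σ) with h | h <;> simp [h]
            rw [h1]
            calc ‖∏ i, m (σ i) i‖ ≤ ∏ i, ‖m (σ i) i‖ := by
                  simpa using norm_prod_le_of_le Finset.univ (fun i _ => le_rfl)
              _ ≤ ∏ i, ‖m (σ i)‖ := by
                  apply Finset.prod_le_prod (fun i _ => norm_nonneg _)
                  intro i _; exact norm_le_pi_norm (m (σ i)) i
              _ = ∏ i, ‖m i‖ := Equiv.prod_comp σ fun i => ‖m i‖
        _ = (Nat.factorial n) * ∏ i, ‖m i‖ := by
            rw [Finset.sum_const, Finset.card_univ, Fintype.card_perm]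
            simp [nsmul_eq_mul]
            )

lemma detCM_apply {n : ℕ} (m : Fin n → (Fin n → ℝ)) : detCM n m = Matrix.det (Matrix.of m) := rfl

lemma detCM_linearDeriv {n : ℕ} (M D : Fin n → Fin n → ℝ) :
    (detCM n).linearDeriv M D = Matrix.trace (Matrix.adjugate (Matrix.of M) * Matrix.of D) := by
  classical
  rw [ContinuousMultilinearMap.linearDeriv_apply]
  have key : ∀ p : Fin n, detCM n (Function.update M p (D p))
      = ∑ q, D p q * Matrix.adjugate (Matrix.of M) q p := by
    intro p
    have hD : D p = ∑ q, D p q • (Pi.single q (1:ℝ) : Fin n → ℝ) := by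
      ext j; simp [Pi.single_apply]
    calc detCM n (Function.update M p (D p))
        = (detCM n).toMultilinearMap (Function.update M p (∑ q, D p q • (Pi.single q (1:ℝ) : Fin n → ℝ))) := by
          rw [← hD]; rfl
      _ = ∑ q, D p q * (detCM n).toMultilinearMap (Function.update M p ((Pi.single q (1:ℝ) : Fin n → ℝ))) := by
          rw [MultilinearMap.map_update_sum]
          congr 1; ext q
          rw [MultilinearMap.map_update_smul]; simp
      _ = ∑ q, D p q * Matrix.adjugate (Matrix.of M) q p := by
          apply Finset.sum_congr rfl; intro q _
          rw [Matrix.adjugate_apply]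
          rfl
  calc ∑ p, detCM n (Function.update M p (D p))
      = ∑ p, ∑ q, D p q * Matrix.adjugate (Matrix.of M) q p := by
        exact Finset.sum_congr rfl (fun p _ => key p)
    _ = Matrix.trace (Matrix.adjugate (Matrix.of M) * Matrix.of D) := by
        rw [Matrix.trace, Finset.sum_comm]
        apply Finset.sum_congr rfl
        intro q _
        simp [Matrix.diag, Matrix.mul_apply, mul_comm]

lemma hpos' {n : ℕ} (ci : E' n) (ri : ℝ) (y : E' n) (h : ‖y - ci‖ < ri) :
    0 < ri ^ 2 - ‖y - ci‖ ^ 2 := by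
  have h0 : (0:ℝ) ≤ ‖y - ci‖ := norm_nonneg _
  nlinarith

lemma hasFDerivAt_q' {n : ℕ} (ci : E' n) (ri : ℝ) (y : E' n) :
    HasFDerivAt (fun z : E' n => ri ^ 2 - ‖z - ci‖ ^ 2)
      (-(2:ℝ) • (innerSL ℝ (y - ci))) y := by
  have h1 : HasFDerivAt (fun z : E' n => z - ci) (ContinuousLinearMap.id ℝ (E' n)) y :=
    (hasFDerivAt_id y).sub_const ci
  have h2 := h1.norm_sq
  have h3 := h2.const_sub (ri ^ 2)
  refine h3.congr_fderiv ?_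
  ext u
  simp [two_smul]

lemma hasFDerivAt_d' {n : ℕ} (ci : E' n) (ri : ℝ) (y : E' n) (h : ‖y - ci‖ < ri) :
    HasFDerivAt (fun z : E' n => (ri ^ 2 - ‖z - ci‖ ^ 2)⁻¹)
      ((2 * ((ri ^ 2 - ‖y - ci‖ ^ 2)⁻¹) ^ 2) • (innerSL ℝ (y - ci))) y := by
  have hq := hasFDerivAt_q' ci ri y
  have hne : ri ^ 2 - ‖y - ci‖ ^ 2 ≠ 0 := ne_of_gt (hpos' ci ri y h)
  have := (hasDerivAt_inv hne).comp_hasFDerivAt y hq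
  refine this.congr_fderiv ?_
  ext u
  simp
  try field_simp
  try ring

noncomputable def Gr {n k : ℕ} (c : Fin k → E' n) (r : Fin k → ℝ) (y : E' n) : E' n :=
  ∑ i, ((r i ^ 2 - ‖y - c i‖ ^ 2)⁻¹) • (y - c i)

noncomputable def Hc {n k : ℕ} (c : Fin k → E' n) (r : Fin k → ℝ) (y : E' n) :
    E' n →L[ℝ] E' n :=
  ∑ i, (((r i ^ 2 - ‖y - c i‖ ^ 2)⁻¹) • ContinuousLinearMap.id ℝ (E' n)
    + ((2 * ((r i ^ 2 - ‖y - c i‖ ^ 2)⁻¹) ^ 2) • innerSL ℝ (y - c i)).smulRight (y - c i))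

lemma hasGradientAt_F {n k : ℕ} (c : Fin k → E' n) (r : Fin k → ℝ)
    (F : E' n → ℝ)
    (hF : ∀ x, F x = -(1 / 2) * ∑ i : Fin k, Real.log (r i ^ 2 - ‖x - c i‖ ^ 2))
    (y : E' n) (hy : ∀ i, ‖y - c i‖ < r i) :
    HasGradientAt F (Gr c r y) y := by
  rw [hasGradientAt_iff_hasFDerivAt]
  have hsum : HasFDerivAt (fun z : E' n => ∑ i : Fin k, Real.log (r i ^ 2 - ‖z - c i‖ ^ 2))
      (∑ i : Fin k, ((r i ^ 2 - ‖y - c i‖ ^ 2)⁻¹ • (-(2:ℝ) • (innerSL ℝ (y - c i))))) y := by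
    apply HasFDerivAt.fun_sum
    intro i _
    exact (hasFDerivAt_q' (c i) (r i) y).log (ne_of_gt (hpos' (c i) (r i) y (hy i)))
  have h2 := hsum.const_mul (-(1/2 : ℝ))
  have hFeq : F = fun z : E' n => -(1/2 : ℝ) * ∑ i : Fin k, Real.log (r i ^ 2 - ‖z - c i‖ ^ 2) :=
    funext hF
  rw [hFeq]
  refine h2.congr_fderiv ?_
  ext u
  simp only [InnerProductSpace.toDual_apply_apply, ContinuousLinearMap.coe_smul', Pi.smul_apply,
    ContinuousLinearMap.coe_sum', Finset.sum_apply, innerSL_apply_apply, smul_eq_mul]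
  rw [Gr, sum_inner]
  rw [Finset.mul_sum]
  apply Finset.sum_congr rfl
  intro i _
  rw [real_inner_smul_left]
  simp
  ring

lemma hasFDerivAt_Gr {n k : ℕ} (c : Fin k → E' n) (r : Fin k → ℝ)
    (y : E' n) (hy : ∀ i, ‖y - c i‖ < r i) :
    HasFDerivAt (Gr c r) (Hc c r y) y := by
  apply HasFDerivAt.fun_sum
  intro i _
  have h1 : HasFDerivAt (fun z : E' n => z - c i) (ContinuousLinearMap.id ℝ (E' n)) y :=
    (hasFDerivAt_id y).sub_const (c i)
  exact (hasFDerivAt_d' (c i) (r i) y (hy i)).smul h1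

lemma isOpen_U {n k : ℕ} (c : Fin k → E' n) (r : Fin k → ℝ) :
    IsOpen {z : E' n | ∀ i, ‖z - c i‖ < r i} := by
  have : {z : E' n | ∀ i, ‖z - c i‖ < r i} = ⋂ i, {z : E' n | ‖z - c i‖ < r i} := by
    ext z; simp
  rw [this]
  apply isOpen_iInter_of_finite
  intro i
  exact isOpen_lt (by fun_prop) continuous_const

lemma fderiv_gradF {n k : ℕ} (c : Fin k → E' n) (r : Fin k → ℝ)
    (F : E' n → ℝ)
    (hF : ∀ x, F x = -(1 / 2) * ∑ i : Fin k, Real.log (r i ^ 2 - ‖x - c i‖ ^ 2))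
    (y : E' n) (hy : ∀ i, ‖y - c i‖ < r i) :
    fderiv ℝ (gradient F) y = Hc c r y := by
  have hev : gradient F =ᶠ[nhds y] Gr c r :=
    Filter.eventuallyEq_of_mem ((isOpen_U c r).mem_nhds hy)
      (fun z hz => (hasGradientAt_F c r F hF z hz).gradient)
  rw [hev.fderiv_eq, (hasFDerivAt_Gr c r y hy).fderiv]

noncomputable def ent {n k : ℕ} (c : Fin k → E' n) (r : Fin k → ℝ) (p q : Fin n)
    (y : E' n) : ℝ :=
  ∑ i, ((r i ^ 2 - ‖y - c i‖ ^ 2)⁻¹ * (if p = q then 1 else 0)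
    + 2 * ((r i ^ 2 - ‖y - c i‖ ^ 2)⁻¹) ^ 2 * ((y - c i) q) * ((y - c i) p))

noncomputable def Dm {n k : ℕ} (c : Fin k → E' n) (r : Fin k → ℝ) (p q : Fin n)
    (x : E' n) : E' n →L[ℝ] ℝ :=
  ∑ i, ((2 * ((r i ^ 2 - ‖x - c i‖ ^ 2)⁻¹) ^ 2 * (if p = q then 1 else 0)
        + 8 * ((r i ^ 2 - ‖x - c i‖ ^ 2)⁻¹) ^ 3 * ((x - c i) q) * ((x - c i) p))
          • innerSL ℝ (x - c i)
    + (2 * ((r i ^ 2 - ‖x - c i‖ ^ 2)⁻¹) ^ 2 * ((x - c i) p)) • (EuclideanSpace.proj q : E' n →L[ℝ] ℝ)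
    + (2 * ((r i ^ 2 - ‖x - c i‖ ^ 2)⁻¹) ^ 2 * ((x - c i) q)) • (EuclideanSpace.proj p : E' n →L[ℝ] ℝ))

lemma hasFDerivAt_coord {n : ℕ} (ci : E' n) (q : Fin n) (y : E' n) :
    HasFDerivAt (fun z : E' n => (z - ci) q) (EuclideanSpace.proj q : E' n →L[ℝ] ℝ) y := by
  have h : HasFDerivAt (fun z : E' n => (EuclideanSpace.proj q : E' n →L[ℝ] ℝ) z - ci q)
      (EuclideanSpace.proj q : E' n →L[ℝ] ℝ) y :=
    (EuclideanSpace.proj q : E' n →L[ℝ] ℝ).hasFDerivAt.sub_const (ci q)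
  exact h

lemma hasFDerivAt_ent {n k : ℕ} (c : Fin k → E' n) (r : Fin k → ℝ) (p q : Fin n)
    (x : E' n) (hx : ∀ i, ‖x - c i‖ < r i) :
    HasFDerivAt (ent c r p q) (Dm c r p q x) x := by
  unfold ent Dm
  apply HasFDerivAt.fun_sum
  intro i _
  have hd := hasFDerivAt_d' (c i) (r i) x (hx i)
  have hcq := hasFDerivAt_coord (c i) q x
  have hcp := hasFDerivAt_coord (c i) p x
  have h1 := hd.mul_const (if p = q then (1:ℝ) else 0)
  have h2 := (((hd.mul hd).const_mul (2:ℝ)).mul hcq).mul hcp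
  have hfun : (fun z : E' n => (r i ^ 2 - ‖z - c i‖ ^ 2)⁻¹ * (if p = q then 1 else 0)
        + 2 * ((r i ^ 2 - ‖z - c i‖ ^ 2)⁻¹) ^ 2 * ((z - c i) q) * ((z - c i) p))
      = (fun z : E' n => (r i ^ 2 - ‖z - c i‖ ^ 2)⁻¹ * (if p = q then 1 else 0)
        + 2 * ((r i ^ 2 - ‖z - c i‖ ^ 2)⁻¹ * (r i ^ 2 - ‖z - c i‖ ^ 2)⁻¹) * ((z - c i) q) * ((z - c i) p)) := by
    funext z; ring
  rw [hfun]
  have h3 := h1.add h2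
  refine h3.congr_fderiv ?_
  ext u
  simp only [ContinuousLinearMap.add_apply, ContinuousLinearMap.smul_apply,
    ContinuousLinearMap.coe_smul', Pi.smul_apply, innerSL_apply_apply, smul_eq_mul,
    ContinuousLinearMap.mul_apply', PiLp.proj_apply, Pi.mul_apply]
  ring

lemma decomp {n : ℕ} (w : E' n) : w = ∑ j, w j • EuclideanSpace.single j (1:ℝ) := by
  ext p
  rw [show (∑ j, w j • EuclideanSpace.single j (1:ℝ)) p = ∑ j, (w j • EuclideanSpace.single j (1:ℝ)) p
    from by rw [WithLp.ofLp_sum]; exact Finset.sum_apply p Finset.univ _]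
  simp [EuclideanSpace.single_apply]

lemma apply_eq {n : ℕ} (S : E' n →L[ℝ] E' n) (w : E' n) (p : Fin n) :
    S w p = ∑ q, S (EuclideanSpace.single q (1:ℝ)) p * w q := by
  conv_lhs => rw [decomp w]
  rw [map_sum]
  rw [show (∑ j, S (w j • EuclideanSpace.single j (1:ℝ))) p
      = ∑ j, (S (w j • EuclideanSpace.single j (1:ℝ))) p from by rw [WithLp.ofLp_sum]; exact Finset.sum_apply p Finset.univ _]
  apply Finset.sum_congr rfl
  intro j _
  rw [map_smul]
  simp [mul_comm]

lemma matOf_mul {n : ℕ} (S T : E' n →L[ℝ] E' n) (h : ∀ w, S (T w) = w) :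
    (Matrix.of fun p q => S (EuclideanSpace.single q (1:ℝ)) p)
      * (Matrix.of fun p q => T (EuclideanSpace.single q (1:ℝ)) p) = 1 := by
  ext p q
  rw [Matrix.mul_apply]
  simp only [Matrix.of_apply]
  rw [← apply_eq S (T (EuclideanSpace.single q (1:ℝ))) p, h]
  simp [EuclideanSpace.single_apply, Matrix.one_apply]

lemma det_toLinearMap {n : ℕ} (S : E' n →L[ℝ] E' n) :
    LinearMap.det (S : E' n →ₗ[ℝ] E' n)
      = Matrix.det (Matrix.of fun p q => S (EuclideanSpace.single q (1:ℝ)) p) := by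
  classical
  let b := (EuclideanSpace.basisFun (Fin n) ℝ).toBasis
  rw [← LinearMap.det_toMatrix b]
  congr 1

lemma trace_toLinearMap {n : ℕ} (S : E' n →L[ℝ] E' n) :
    LinearMap.trace ℝ (E' n) (S : E' n →ₗ[ℝ] E' n)
      = Matrix.trace (Matrix.of fun p q => S (EuclideanSpace.single q (1:ℝ)) p) := by
  classical
  let b := (EuclideanSpace.basisFun (Fin n) ℝ).toBasis
  rw [LinearMap.trace_eq_matrix_trace ℝ b]
  congr 1

lemma ent_eq_Hc {n k : ℕ} (c : Fin k → E' n) (r : Fin k → ℝ) (p q : Fin n) (y : E' n) :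
    ent c r p q y = Hc c r y (EuclideanSpace.single q (1:ℝ)) p := by
  rw [Hc, ent]
  rw [ContinuousLinearMap.sum_apply]
  rw [show (∑ i, (((r i ^ 2 - ‖y - c i‖ ^ 2)⁻¹) • ContinuousLinearMap.id ℝ (E' n)
    + ((2 * ((r i ^ 2 - ‖y - c i‖ ^ 2)⁻¹) ^ 2) • innerSL ℝ (y - c i)).smulRight (y - c i))
      (EuclideanSpace.single q (1:ℝ))) p
    = ∑ i, ((((r i ^ 2 - ‖y - c i‖ ^ 2)⁻¹) • ContinuousLinearMap.id ℝ (E' n)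
    + ((2 * ((r i ^ 2 - ‖y - c i‖ ^ 2)⁻¹) ^ 2) • innerSL ℝ (y - c i)).smulRight (y - c i))
      (EuclideanSpace.single q (1:ℝ))) p from by rw [WithLp.ofLp_sum]; exact Finset.sum_apply p Finset.univ _]
  apply Finset.sum_congr rfl
  intro i _
  simp only [ContinuousLinearMap.add_apply, ContinuousLinearMap.smul_apply,
    ContinuousLinearMap.coe_id', id_eq, ContinuousLinearMap.smulRight_apply,
    ContinuousLinearMap.coe_smul', Pi.smul_apply, innerSL_apply_apply, smul_eq_mul]
  rw [show ((r i ^ 2 - ‖y - c i‖ ^ 2)⁻¹ • EuclideanSpace.single q (1:ℝ)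
      + (2 * ((r i ^ 2 - ‖y - c i‖ ^ 2)⁻¹) ^ 2 * ⟪y - c i, EuclideanSpace.single q (1:ℝ)⟫) • (y - c i)) p
    = (r i ^ 2 - ‖y - c i‖ ^ 2)⁻¹ * (EuclideanSpace.single q (1:ℝ) p)
      + (2 * ((r i ^ 2 - ‖y - c i‖ ^ 2)⁻¹) ^ 2 * ⟪y - c i, EuclideanSpace.single q (1:ℝ)⟫) * ((y - c i) p) from rfl]
  have hin : ⟪y - c i, EuclideanSpace.single q (1:ℝ)⟫ = (y - c i) q := by
    rw [real_inner_comm]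
    simp [EuclideanSpace.inner_single_left]
  rw [hin]
  rcases eq_or_ne p q with h | h <;>
    simp [h, EuclideanSpace.single_apply]

lemma inner_coords {n : ℕ} (a b : E' n) : ⟪a, b⟫ = ∑ p, a p * b p := by
  rw [PiLp.inner_apply]
  simp [RCLike.inner_apply, mul_comm]


lemma double_sum_key {n : ℕ} (A : Matrix (Fin n) (Fin n) ℝ) (hA : ∀ p q, A p q = A q p)
    (e u : Fin n → ℝ) (α β γ : ℝ) :
    ∑ p, ∑ j, A p j * ((α * (if j = p then 1 else 0) + β * e p * e j) + γ * e j * u p + γ * e p * u j)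
      = α * (∑ p, A p p) + β * (∑ p, ∑ j, e p * A p j * e j)
        + 2 * γ * (∑ p, ∑ j, A p j * e j * u p) := by
  have split : ∀ p : Fin n,
      ∑ j, A p j * ((α * (if j = p then 1 else 0) + β * e p * e j) + γ * e j * u p + γ * e p * u j)
      = (∑ j, A p j * α * (if j = p then 1 else 0)) + (∑ j, β * (e p * A p j * e j))
        + (∑ j, γ * (A p j * e j * u p)) + (∑ j, A p j * γ * e p * u j) := by
    intro p
    rw [← Finset.sum_add_distrib, ← Finset.sum_add_distrib, ← Finset.sum_add_distrib]
    apply Finset.sum_congr rfl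
    intro j _
    ring
  rw [Finset.sum_congr rfl (fun p _ => split p)]
  rw [Finset.sum_add_distrib, Finset.sum_add_distrib, Finset.sum_add_distrib]
  have hS1 : ∑ p, ∑ j, A p j * α * (if j = p then 1 else 0) = α * ∑ p, A p p := by
    rw [Finset.mul_sum]
    apply Finset.sum_congr rfl
    intro p _
    rw [Finset.sum_eq_single p]
    · simp [mul_comm]
    · intro j _ hj; simp [hj]
    · intro h; simp at h
  have hS2 : ∑ p, ∑ j, β * (e p * A p j * e j) = β * ∑ p, ∑ j, e p * A p j * e j := by
    rw [Finset.mul_sum]; apply Finset.sum_congr rfl; intro p _; rw [Finset.mul_sum]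
  have hS3 : ∑ p, ∑ j, γ * (A p j * e j * u p) = γ * ∑ p, ∑ j, A p j * e j * u p := by
    rw [Finset.mul_sum]; apply Finset.sum_congr rfl; intro p _; rw [Finset.mul_sum]
  have hS4 : ∑ p, ∑ j, A p j * γ * e p * u j = γ * ∑ p, ∑ j, A p j * e j * u p := by
    rw [Finset.sum_comm]
    rw [Finset.mul_sum]
    apply Finset.sum_congr rfl
    intro j _
    rw [Finset.mul_sum]
    apply Finset.sum_congr rfl
    intro p _
    rw [hA p j]
    ring
  rw [hS1, hS2, hS3, hS4]
  ring

lemma Dm_apply {n k : ℕ} (c : Fin k → E' n) (r : Fin k → ℝ) (p q : Fin n) (x u : E' n) :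
    Dm c r p q x u = ∑ i,
      ((2 * ((r i ^ 2 - ‖x - c i‖ ^ 2)⁻¹) ^ 2 * (if p = q then 1 else 0)
        + 8 * ((r i ^ 2 - ‖x - c i‖ ^ 2)⁻¹) ^ 3 * ((x - c i) q) * ((x - c i) p)) * ⟪x - c i, u⟫
      + 2 * ((r i ^ 2 - ‖x - c i‖ ^ 2)⁻¹) ^ 2 * ((x - c i) p) * (u q)
      + 2 * ((r i ^ 2 - ‖x - c i‖ ^ 2)⁻¹) ^ 2 * ((x - c i) q) * (u p)) := by
  rw [Dm, ContinuousLinearMap.sum_apply]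
  apply Finset.sum_congr rfl
  intro i _
  simp only [ContinuousLinearMap.add_apply, ContinuousLinearMap.smul_apply, innerSL_apply_apply,
    smul_eq_mul, PiLp.proj_apply]

lemma comb {k : ℕ} (a b cc : Fin k → ℝ) (s t w : ℝ) :
    s * (∑ i, a i) + t * (∑ i, b i) + w * (∑ i, cc i)
      = ∑ i, (s * a i + t * b i + w * cc i) := by
  rw [Finset.mul_sum, Finset.mul_sum, Finset.mul_sum, ← Finset.sum_add_distrib,
    ← Finset.sum_add_distrib]

/-- Gradient of the volumetric barrier `v_R = log det ∇²F_R` of an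
intersection of balls at an interior point `x`: writing `H = ∇²F_R(x)`,
`dᵢ = (rᵢ² − ‖x − cᵢ‖²)⁻¹` and `σᵢ = dᵢ²·⟪x − cᵢ, H⁻¹(x − cᵢ)⟫`, one has
`∇v_R(x) = (2·tr H⁻¹)·Σᵢ dᵢ²(x − cᵢ) + 4·H⁻¹(Σᵢ dᵢ²(x − cᵢ)) + 8·Σᵢ dᵢσᵢ(x − cᵢ)`. -/
theorem stmt6 {n k : ℕ} (c : Fin k → EuclideanSpace ℝ (Fin n)) (r : Fin k → ℝ)
    (hr : ∀ i, 0 < r i)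
    (F : EuclideanSpace ℝ (Fin n) → ℝ)
    (hF : ∀ x, F x = -(1 / 2) * ∑ i : Fin k, Real.log (r i ^ 2 - ‖x - c i‖ ^ 2))
    (v : EuclideanSpace ℝ (Fin n) → ℝ)
    (hv : ∀ y, v y = Real.log (LinearMap.det (fderiv ℝ (gradient F) y).toLinearMap))
    (x : EuclideanSpace ℝ (Fin n)) (hx : ∀ i, ‖x - c i‖ < r i)
    (Hinv : EuclideanSpace ℝ (Fin n) →L[ℝ] EuclideanSpace ℝ (Fin n))
    (hHinv : ∀ u, Hinv (fderiv ℝ (gradient F) x u) = u ∧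
      fderiv ℝ (gradient F) x (Hinv u) = u) :
    HasGradientAt v
      ((2 * LinearMap.trace ℝ (EuclideanSpace ℝ (Fin n)) Hinv.toLinearMap) •
          (∑ i : Fin k, ((r i ^ 2 - ‖x - c i‖ ^ 2)⁻¹) ^ 2 • (x - c i))
        + (4 : ℝ) • Hinv (∑ i : Fin k, ((r i ^ 2 - ‖x - c i‖ ^ 2)⁻¹) ^ 2 • (x - c i))
        + (8 : ℝ) • ∑ i : Fin k,
            ((r i ^ 2 - ‖x - c i‖ ^ 2)⁻¹ *
              (((r i ^ 2 - ‖x - c i‖ ^ 2)⁻¹) ^ 2 *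
                (inner ℝ (x - c i) (Hinv (x - c i)) : ℝ))) • (x - c i)) x := by
  classical
  have hH : fderiv ℝ (gradient F) x = Hc c r x := fderiv_gradF c r F hF x hx
  have hST : ∀ w, Hc c r x (Hinv w) = w := by
    intro w; have := (hHinv w).2; rwa [hH] at this
  have hTS : ∀ w, Hinv (Hc c r x w) = w := by
    intro w; have := (hHinv w).1; rwa [hH] at this
  set Mx : Matrix (Fin n) (Fin n) ℝ := Matrix.of fun p q => ent c r p q x with hMx
  set MH : Matrix (Fin n) (Fin n) ℝ :=
    Matrix.of fun p q => Hinv (EuclideanSpace.single q (1:ℝ)) p with hMH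
  have hMxHc : Mx = Matrix.of fun p q => Hc c r x (EuclideanSpace.single q (1:ℝ)) p := by
    rw [hMx]; ext p q; exact ent_eq_Hc c r p q x
  have h1 : Mx * MH = 1 := by rw [hMxHc, hMH]; exact matOf_mul _ _ hST
  have h2 : MH * Mx = 1 := by rw [hMxHc, hMH]; exact matOf_mul _ _ hTS
  have hdet0 : Matrix.det Mx ≠ 0 := by
    intro h
    have := congrArg Matrix.det h1
    rw [Matrix.det_mul, h, Matrix.det_one, zero_mul] at this
    exact zero_ne_one this
  have hMxsym : Mx = Mxᵀ := by
    rw [hMx]; ext p q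
    simp only [Matrix.transpose_apply, Matrix.of_apply]
    unfold ent
    apply Finset.sum_congr rfl
    intro i _
    rcases eq_or_ne p q with h | h
    · rw [h]
    · rw [if_neg h, if_neg (Ne.symm h)]; ring
  have hMHsym : MH = MHᵀ := by
    have h3 : MHᵀ * Mx = 1 := by
      have := congrArg Matrix.transpose h1
      rw [Matrix.transpose_mul, Matrix.transpose_one] at this
      rwa [← hMxsym] at this
    calc MH = 1 * MH := (one_mul _).symm
      _ = (MHᵀ * Mx) * MH := by rw [h3]
      _ = MHᵀ * (Mx * MH) := by rw [Matrix.mul_assoc]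
      _ = MHᵀ := by rw [h1, Matrix.mul_one]
  have hsym : ∀ p q, MH p q = MH q p := by
    intro p q
    conv_lhs => rw [hMHsym]
    simp [Matrix.transpose_apply]
  have hadj : Matrix.adjugate Mx = Matrix.det Mx • MH := by
    calc Matrix.adjugate Mx = (MH * Mx) * Matrix.adjugate Mx := by rw [h2, one_mul]
      _ = MH * (Mx * Matrix.adjugate Mx) := by rw [Matrix.mul_assoc]
      _ = MH * (Matrix.det Mx • 1) := by rw [Matrix.mul_adjugate]
      _ = Matrix.det Mx • MH := by rw [Matrix.mul_smul, Matrix.mul_one]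
  -- the derivative of the matrix-valued map
  set Φ : E' n →L[ℝ] (Fin n → Fin n → ℝ) :=
    ContinuousLinearMap.pi (fun p => ContinuousLinearMap.pi (fun q => Dm c r p q x)) with hΦ
  have hMat : HasFDerivAt (fun y => (fun p q => ent c r p q y)) Φ x := by
    apply hasFDerivAt_pi''
    intro p
    rw [hΦ, ContinuousLinearMap.proj_pi]
    apply hasFDerivAt_pi''
    intro q
    rw [ContinuousLinearMap.proj_pi]
    exact hasFDerivAt_ent c r p q x hx
  have hdetM : HasFDerivAt (fun y => detCM n (fun p q => ent c r p q y))
      (((detCM n).linearDeriv (fun p q => ent c r p q x)).comp Φ) x :=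
    ((detCM n).hasFDerivAt _).comp x hMat
  have hlog : HasFDerivAt (fun y => Real.log (detCM n (fun p q => ent c r p q y)))
      ((detCM n (fun p q => ent c r p q x))⁻¹ •
        (((detCM n).linearDeriv (fun p q => ent c r p q x)).comp Φ)) x :=
    hdetM.log (by rw [detCM_apply]; exact hdet0)
  have hveq : v =ᶠ[nhds x] fun y => Real.log (detCM n (fun p q => ent c r p q y)) := by
    apply Filter.eventuallyEq_of_mem ((isOpen_U c r).mem_nhds hx)
    intro y hy
    rw [hv y, fderiv_gradF c r F hF y hy]
    show Real.log (LinearMap.det ((Hc c r y : E' n →L[ℝ] E' n) : E' n →ₗ[ℝ] E' n))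
      = Real.log (detCM n fun p q => ent c r p q y)
    rw [detCM_apply]
    congr 1
    rw [show ((Hc c r y : E' n →L[ℝ] E' n) : E' n →ₗ[ℝ] E' n).det
        = Matrix.det (Matrix.of fun p q => Hc c r y (EuclideanSpace.single q (1:ℝ)) p)
      from det_toLinearMap _]
    congr 1
    ext p q
    exact (ent_eq_Hc c r p q y).symm
  have hlog' := hlog.congr_of_eventuallyEq hveq
  rw [hasGradientAt_iff_hasFDerivAt]
  have hfinal : (InnerProductSpace.toDual ℝ (EuclideanSpace ℝ (Fin n)))
      ((2 * LinearMap.trace ℝ (EuclideanSpace ℝ (Fin n)) Hinv.toLinearMap) •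
          (∑ i : Fin k, ((r i ^ 2 - ‖x - c i‖ ^ 2)⁻¹) ^ 2 • (x - c i))
        + (4 : ℝ) • Hinv (∑ i : Fin k, ((r i ^ 2 - ‖x - c i‖ ^ 2)⁻¹) ^ 2 • (x - c i))
        + (8 : ℝ) • ∑ i : Fin k,
            ((r i ^ 2 - ‖x - c i‖ ^ 2)⁻¹ *
              (((r i ^ 2 - ‖x - c i‖ ^ 2)⁻¹) ^ 2 *
                (inner ℝ (x - c i) (Hinv (x - c i)) : ℝ))) • (x - c i))
      = ((detCM n (fun p q => ent c r p q x))⁻¹ •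
        (((detCM n).linearDeriv (fun p q => ent c r p q x)).comp Φ)) := by
    ext u
    rw [InnerProductSpace.toDual_apply_apply]
    rw [ContinuousLinearMap.smul_apply, ContinuousLinearMap.comp_apply]
    have hΦu : Φ u = fun p q => Dm c r p q x u := rfl
    rw [hΦu, detCM_linearDeriv, ← hMx, hadj, Matrix.smul_mul, Matrix.trace_smul]
    rw [show detCM n (fun p q => ent c r p q x) = Mx.det from by rw [detCM_apply, ← hMx]]
    rw [smul_eq_mul, smul_eq_mul, inv_mul_cancel_left₀ hdet0]
    have htr : Matrix.trace (MH * Matrix.of (fun p q => Dm c r p q x u))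
        = ∑ p, ∑ j, MH p j * Dm c r j p x u := by
      simp [Matrix.trace, Matrix.diag, Matrix.mul_apply]
    rw [htr]
    have hstep : ∀ p j : Fin n, MH p j * Dm c r j p x u
        = ∑ i, MH p j *
          ((2 * ((r i ^ 2 - ‖x - c i‖ ^ 2)⁻¹) ^ 2 * ⟪x - c i, u⟫ * (if j = p then 1 else 0)
            + 8 * ((r i ^ 2 - ‖x - c i‖ ^ 2)⁻¹) ^ 3 * ⟪x - c i, u⟫ * ((x - c i) p) * ((x - c i) j))
          + (2 * ((r i ^ 2 - ‖x - c i‖ ^ 2)⁻¹) ^ 2) * ((x - c i) j) * (u p)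
          + (2 * ((r i ^ 2 - ‖x - c i‖ ^ 2)⁻¹) ^ 2) * ((x - c i) p) * (u j)) := by
      intro p j
      rw [Dm_apply, Finset.mul_sum]
      apply Finset.sum_congr rfl
      intro i _
      ring
    rw [Finset.sum_congr rfl (fun p _ => Finset.sum_congr rfl (fun j _ => hstep p j))]
    have hswap : ∑ p : Fin n, ∑ j : Fin n, ∑ i : Fin k, (fun i p j => MH p j *
          ((2 * ((r i ^ 2 - ‖x - c i‖ ^ 2)⁻¹) ^ 2 * ⟪x - c i, u⟫ * (if j = p then 1 else 0)
            + 8 * ((r i ^ 2 - ‖x - c i‖ ^ 2)⁻¹) ^ 3 * ⟪x - c i, u⟫ * ((x - c i) p) * ((x - c i) j))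
          + (2 * ((r i ^ 2 - ‖x - c i‖ ^ 2)⁻¹) ^ 2) * ((x - c i) j) * (u p)
          + (2 * ((r i ^ 2 - ‖x - c i‖ ^ 2)⁻¹) ^ 2) * ((x - c i) p) * (u j))) i p j
        = ∑ i : Fin k, ∑ p : Fin n, ∑ j : Fin n, (fun i p j => MH p j *
          ((2 * ((r i ^ 2 - ‖x - c i‖ ^ 2)⁻¹) ^ 2 * ⟪x - c i, u⟫ * (if j = p then 1 else 0)
            + 8 * ((r i ^ 2 - ‖x - c i‖ ^ 2)⁻¹) ^ 3 * ⟪x - c i, u⟫ * ((x - c i) p) * ((x - c i) j))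
          + (2 * ((r i ^ 2 - ‖x - c i‖ ^ 2)⁻¹) ^ 2) * ((x - c i) j) * (u p)
          + (2 * ((r i ^ 2 - ‖x - c i‖ ^ 2)⁻¹) ^ 2) * ((x - c i) p) * (u j))) i p j := by
      rw [Finset.sum_congr rfl (fun p _ => Finset.sum_comm)]
      exact Finset.sum_comm
    rw [hswap]
    have hTr : LinearMap.trace ℝ (EuclideanSpace ℝ (Fin n)) Hinv.toLinearMap = ∑ p, MH p p := by
      rw [show (Hinv.toLinearMap : E' n →ₗ[ℝ] E' n) = (Hinv : E' n →ₗ[ℝ] E' n) from rfl]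
      rw [trace_toLinearMap, ← hMH]
      simp [Matrix.trace, Matrix.diag]
    have hHinvApp : ∀ (w : E' n) (p : Fin n), Hinv w p = ∑ j, MH p j * w j := by
      intro w p
      rw [apply_eq Hinv w p]
      exact Finset.sum_congr rfl (fun j _ => by rw [hMH]; rfl)
    have hR : ∀ i : Fin k, ⟪Hinv (x - c i), u⟫ = ∑ p, ∑ j, MH p j * (x - c i) j * u p := by
      intro i
      rw [inner_coords]
      apply Finset.sum_congr rfl
      intro p _
      rw [hHinvApp (x - c i) p, Finset.sum_mul]
    have hQ : ∀ i : Fin k, (inner ℝ (x - c i) (Hinv (x - c i)) : ℝ)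
        = ∑ p, ∑ j, (x - c i) p * MH p j * (x - c i) j := by
      intro i
      rw [show (inner ℝ (x - c i) (Hinv (x - c i)) : ℝ) = ⟪x - c i, Hinv (x - c i)⟫ from rfl]
      rw [inner_coords]
      apply Finset.sum_congr rfl
      intro p _
      rw [hHinvApp (x - c i) p, Finset.mul_sum]
      apply Finset.sum_congr rfl
      intro j _
      ring
    have per_i : ∀ i : Fin k, ∑ p : Fin n, ∑ j : Fin n, MH p j *
          ((2 * ((r i ^ 2 - ‖x - c i‖ ^ 2)⁻¹) ^ 2 * ⟪x - c i, u⟫ * (if j = p then 1 else 0)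
            + 8 * ((r i ^ 2 - ‖x - c i‖ ^ 2)⁻¹) ^ 3 * ⟪x - c i, u⟫ * ((x - c i) p) * ((x - c i) j))
          + (2 * ((r i ^ 2 - ‖x - c i‖ ^ 2)⁻¹) ^ 2) * ((x - c i) j) * (u p)
          + (2 * ((r i ^ 2 - ‖x - c i‖ ^ 2)⁻¹) ^ 2) * ((x - c i) p) * (u j))
        = (2 * ((r i ^ 2 - ‖x - c i‖ ^ 2)⁻¹) ^ 2 * ⟪x - c i, u⟫) * (∑ p, MH p p)
          + (8 * ((r i ^ 2 - ‖x - c i‖ ^ 2)⁻¹) ^ 3 * ⟪x - c i, u⟫)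
              * (∑ p, ∑ j, (x - c i) p * MH p j * (x - c i) j)
          + 2 * (2 * ((r i ^ 2 - ‖x - c i‖ ^ 2)⁻¹) ^ 2)
              * (∑ p, ∑ j, MH p j * (x - c i) j * u p) := by
      intro i
      have hre : ∀ p j : Fin n, MH p j *
          ((2 * ((r i ^ 2 - ‖x - c i‖ ^ 2)⁻¹) ^ 2 * ⟪x - c i, u⟫ * (if j = p then 1 else 0)
            + 8 * ((r i ^ 2 - ‖x - c i‖ ^ 2)⁻¹) ^ 3 * ⟪x - c i, u⟫ * ((x - c i) p) * ((x - c i) j))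
          + (2 * ((r i ^ 2 - ‖x - c i‖ ^ 2)⁻¹) ^ 2) * ((x - c i) j) * (u p)
          + (2 * ((r i ^ 2 - ‖x - c i‖ ^ 2)⁻¹) ^ 2) * ((x - c i) p) * (u j))
        = MH p j *
          (((2 * ((r i ^ 2 - ‖x - c i‖ ^ 2)⁻¹) ^ 2 * ⟪x - c i, u⟫) * (if j = p then 1 else 0)
            + (8 * ((r i ^ 2 - ‖x - c i‖ ^ 2)⁻¹) ^ 3 * ⟪x - c i, u⟫) * ((x - c i) p) * ((x - c i) j))
          + (2 * ((r i ^ 2 - ‖x - c i‖ ^ 2)⁻¹) ^ 2) * ((x - c i) j) * (u p)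
          + (2 * ((r i ^ 2 - ‖x - c i‖ ^ 2)⁻¹) ^ 2) * ((x - c i) p) * (u j)) := by
        intro p j; ring
      rw [Finset.sum_congr rfl (fun p _ => Finset.sum_congr rfl (fun j _ => hre p j))]
      exact double_sum_key MH hsym (fun p => (x - c i) p) (fun p => u p)
        (2 * ((r i ^ 2 - ‖x - c i‖ ^ 2)⁻¹) ^ 2 * ⟪x - c i, u⟫)
        (8 * ((r i ^ 2 - ‖x - c i‖ ^ 2)⁻¹) ^ 3 * ⟪x - c i, u⟫)
        (2 * ((r i ^ 2 - ‖x - c i‖ ^ 2)⁻¹) ^ 2)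
    rw [Finset.sum_congr rfl (fun i _ => per_i i)]
    have hA : ⟪∑ i : Fin k, ((r i ^ 2 - ‖x - c i‖ ^ 2)⁻¹) ^ 2 • (x - c i), u⟫
        = ∑ i : Fin k, ((r i ^ 2 - ‖x - c i‖ ^ 2)⁻¹) ^ 2 * ⟪x - c i, u⟫ := by
      rw [sum_inner]
      exact Finset.sum_congr rfl (fun i _ => real_inner_smul_left _ _ _)
    have hB : ⟪Hinv (∑ i : Fin k, ((r i ^ 2 - ‖x - c i‖ ^ 2)⁻¹) ^ 2 • (x - c i)), u⟫
        = ∑ i : Fin k, ((r i ^ 2 - ‖x - c i‖ ^ 2)⁻¹) ^ 2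
            * (∑ p, ∑ j, MH p j * (x - c i) j * u p) := by
      rw [map_sum, sum_inner]
      apply Finset.sum_congr rfl
      intro i _
      rw [map_smul, real_inner_smul_left, hR i]
    have hC : ⟪∑ i : Fin k,
          ((r i ^ 2 - ‖x - c i‖ ^ 2)⁻¹ *
            (((r i ^ 2 - ‖x - c i‖ ^ 2)⁻¹) ^ 2 *
              (inner ℝ (x - c i) (Hinv (x - c i)) : ℝ))) • (x - c i), u⟫
        = ∑ i : Fin k, ((r i ^ 2 - ‖x - c i‖ ^ 2)⁻¹ *
            (((r i ^ 2 - ‖x - c i‖ ^ 2)⁻¹) ^ 2 *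
              (∑ p, ∑ j, (x - c i) p * MH p j * (x - c i) j))) * ⟪x - c i, u⟫ := by
      rw [sum_inner]
      apply Finset.sum_congr rfl
      intro i _
      rw [real_inner_smul_left, hQ i]
    rw [inner_add_left, inner_add_left, real_inner_smul_left, real_inner_smul_left,
      real_inner_smul_left, hA, hB, hC, hTr]
    rw [comb]
    apply Finset.sum_congr rfl
    intro i _
    ring
  rw [hfinal]
  exact hlog'
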